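/- For every integer M ≥ 1 and every integer r ≥ 2, one has Pr_P(r) ≥ Pr_N(r−1) · (min over integers k with r−1 ≤ k ≤ M·(r−1) of #{j ∈ {1,…,M} : k+j is prime}) / M. -/
import Mathlib


open scoped Classical

/-- A tuple `η : Fin r → ℕ` (with entries thought of as lying in `{1,…,M}`) is *admissible*
if no proper partial sum `η₁ + ⋯ + η_ℓ` (for `1 ≤ ℓ < r`) is a prime number. -/
def IsAdmissible (r : ℕ) (η : Fin r → ℕ) : Prop :=
  ∀ ℓ : ℕ, 1 ≤ ℓ → ℓ < r →
    ¬ Nat.Prime (∑ i ∈ Finset.univ.filter (fun i : Fin r => (i : ℕ) < ℓ), η i)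

/-- `PrP M r = M⁻ʳ · #{admissible tuples in {1,…,M}ʳ of length r whose total sum is prime}`. -/
noncomputable def PrP (M r : ℕ) : ℝ :=
  (((Fintype.piFinset fun _ : Fin r => Finset.Icc 1 M).filter
      (fun η => IsAdmissible r η ∧ Nat.Prime (∑ i, η i))).card : ℝ) / (M : ℝ) ^ r

/-- `PrN M r = M⁻ʳ · #{admissible tuples in {1,…,M}ʳ of length r whose total sum is not prime}`. -/
noncomputable def PrN (M r : ℕ) : ℝ :=
  (((Fintype.piFinset fun _ : Fin r => Finset.Icc 1 M).filter
      (fun η => IsAdmissible r η ∧ ¬ Nat.Prime (∑ i, η i))).card : ℝ) / (M : ℝ) ^ r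

/-- For M ≥ 1 and r ≥ 2: Pr_P(r) ≥ Pr_N(r−1) · (min over k with r−1 ≤ k ≤ M(r−1) of
#{j ∈ {1,…,M} : k+j prime}) / M. -/
lemma sum_filter_snoc (n ℓ : ℕ) (hℓ : ℓ ≤ n) (η : Fin n → ℕ) (j : ℕ) :
    ∑ i ∈ Finset.univ.filter (fun i : Fin (n+1) => (i : ℕ) < ℓ), Fin.snoc η j i
      = ∑ i ∈ Finset.univ.filter (fun i : Fin n => (i : ℕ) < ℓ), η i := by
  rw [Finset.sum_filter, Finset.sum_filter, Fin.sum_univ_castSucc]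
  simp [Fin.snoc_castSucc, Nat.not_lt.mpr hℓ]

lemma sum_snoc (n : ℕ) (η : Fin n → ℕ) (j : ℕ) :
    ∑ i, Fin.snoc η j i = (∑ i, η i) + j := by
  rw [Fin.sum_univ_castSucc]; simp

theorem PrP_ge_min (M : ℕ) (hM : 1 ≤ M) (r : ℕ) (hr : 2 ≤ r) :
    PrP M r ≥ PrN M (r - 1) *
      ((((Finset.Icc (r - 1) (M * (r - 1))).inf'
            (Finset.nonempty_Icc.mpr (Nat.le_mul_of_pos_left _ hM))
            (fun k => ((Finset.Icc 1 M).filter (fun j => Nat.Prime (k + j))).card) : ℕ) : ℝ)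
        / (M : ℝ)) := by
  obtain ⟨n, rfl⟩ : ∃ n, r = n + 1 := ⟨r - 1, (Nat.succ_pred_eq_of_pos (by omega)).symm⟩
  have hn : 1 ≤ n := by omega
  simp only [Nat.add_sub_cancel]
  set c : ℕ := (Finset.Icc n (M * n)).inf'
      (Finset.nonempty_Icc.mpr (Nat.le_mul_of_pos_left _ hM))
      (fun k => ((Finset.Icc 1 M).filter (fun j => Nat.Prime (k + j))).card) with hc
  set s := (Fintype.piFinset fun _ : Fin n => Finset.Icc 1 M).filter
      (fun η => IsAdmissible n η ∧ ¬ Nat.Prime (∑ i, η i)) with hs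
  set t := (Fintype.piFinset fun _ : Fin (n+1) => Finset.Icc 1 M).filter
      (fun η => IsAdmissible (n+1) η ∧ Nat.Prime (∑ i, η i)) with ht
  -- the extension sets
  set T : (Fin n → ℕ) → Finset (Fin (n+1) → ℕ) := fun η =>
      ((Finset.Icc 1 M).filter (fun j => Nat.Prime ((∑ i, η i) + j))).image
        (fun j => Fin.snoc η j) with hT
  -- key counting bound : s.card * c ≤ t.card
  have key : s.card * c ≤ t.card := by
    have hsub : s.biUnion T ⊆ t := by
      intro x hx
      rw [Finset.mem_biUnion] at hx
      obtain ⟨η, hη, hx⟩ := hx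
      rw [hT] at hx
      simp only [Finset.mem_image, Finset.mem_filter] at hx
      obtain ⟨j, ⟨hjM, hjp⟩, rfl⟩ := hx
      rw [hs, Finset.mem_filter, Fintype.mem_piFinset] at hη
      obtain ⟨hmem, hadm, hnp⟩ := hη
      rw [ht, Finset.mem_filter, Fintype.mem_piFinset]
      refine ⟨fun i => ?_, fun ℓ h1 h2 => ?_, ?_⟩
      · cases i using Fin.lastCases with
        | last => simpa using hjM
        | cast i => simpa using hmem i
      · rw [sum_filter_snoc n ℓ (by omega)]
        rcases Nat.lt_or_ge ℓ n with h | h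
        · exact hadm ℓ h1 h
        · have hfull : (Finset.univ.filter (fun i : Fin n => (i:ℕ) < ℓ)) = Finset.univ := by
            ext i; simp only [Finset.mem_filter, Finset.mem_univ, true_and, iff_true]
            have := i.isLt; omega
          rw [hfull]; exact hnp
      · rw [sum_snoc]; exact hjp
    have hdisj : ∀ η₁ ∈ s, ∀ η₂ ∈ s, η₁ ≠ η₂ → Disjoint (T η₁) (T η₂) := by
      intro η₁ _ η₂ _ hne
      rw [Finset.disjoint_left]
      intro x hx1 hx2
      rw [hT] at hx1 hx2
      simp only [Finset.mem_image] at hx1 hx2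
      obtain ⟨j₁, _, h1⟩ := hx1
      obtain ⟨j₂, _, h2⟩ := hx2
      apply hne
      funext i
      have := congrFun (h1.trans h2.symm) i.castSucc
      simpa using this
    have hcard : ∑ η ∈ s, (T η).card = (s.biUnion T).card :=
      (Finset.card_biUnion hdisj).symm
    have hTcard : ∀ η ∈ s, c ≤ (T η).card := by
      intro η hη
      rw [hs, Finset.mem_filter, Fintype.mem_piFinset] at hη
      obtain ⟨hmem, _⟩ := hη
      have hinj : Function.Injective (fun j : ℕ => (Fin.snoc η j : Fin (n+1) → ℕ)) := by
        intro a b hab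
        have := congrFun hab (Fin.last n)
        simpa using this
      rw [hT]
      simp only
      rw [Finset.card_image_of_injective _ hinj]
      have hrange : (∑ i, η i) ∈ Finset.Icc n (M * n) := by
        rw [Finset.mem_Icc]
        constructor
        · calc n = ∑ _i : Fin n, 1 := by simp
            _ ≤ ∑ i, η i := Finset.sum_le_sum fun i _ => (Finset.mem_Icc.mp (hmem i)).1
        · calc ∑ i, η i ≤ ∑ _i : Fin n, M :=
              Finset.sum_le_sum fun i _ => (Finset.mem_Icc.mp (hmem i)).2
            _ = M * n := by simp [Nat.mul_comm]
      exact Finset.inf'_le _ hrange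
    calc s.card * c = ∑ _η ∈ s, c := by rw [Finset.sum_const, smul_eq_mul]
      _ ≤ ∑ η ∈ s, (T η).card := Finset.sum_le_sum hTcard
      _ = (s.biUnion T).card := hcard
      _ ≤ t.card := Finset.card_le_card hsub
  -- arithmetic conclusion
  have hM0 : (0:ℝ) < M := by exact_mod_cast hM
  have hMn : (0:ℝ) < (M:ℝ) ^ n := by positivity
  rw [PrP, PrN, ge_iff_le, ← hs, ← ht]
  have : ((s.card : ℝ) / (M:ℝ)^n) * ((c:ℝ) / M) = ((s.card : ℝ) * c) / (M:ℝ)^(n+1) := by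
    rw [pow_succ]; field_simp
  rw [this]
  gcongr
  exact_mod_cast key
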